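/- Suppose r = q*, λ is purely imaginary (λ = −λ*), and Φ = (f, g)ᵀ satisfies Φ_x = (−iλ² + (i/4)qr) J Φ + λ Q Φ with initial condition g(x₀) = f(x₀)* at some point x₀. Then g(x) = f(x)* for all x. -/

import Mathlib

open Complex ComplexConjugate

/-- For purely imaginary `λ` and `r = q*`, if `(f,g)` solves the `x`-part of the
Lax pair (an ODE in `x`) with `g(x₀) = f(x₀)*`, then `g = f*` identically. -/
theorem lax_ode_conjugate_invariant (q : ℝ → ℂ) (hq : Continuous q)
    (lam : ℂ) (hlam : conj lam = -lam) (f g : ℝ → ℂ) (x₀ : ℝ)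
    (hf : ∀ x, HasDerivAt f
      ((-Complex.I * lam^2 + (Complex.I / 4) * q x * conj (q x)) * f x
        + lam * q x * g x) x)
    (hg : ∀ x, HasDerivAt g
      (-(-Complex.I * lam^2 + (Complex.I / 4) * q x * conj (q x)) * g x
        - lam * conj (q x) * f x) x)
    (h0 : g x₀ = conj (f x₀)) :
    ∀ x, g x = conj (f x) := by
  intro x
  -- the coefficient
  set A : ℝ → ℂ := fun t => -Complex.I * lam^2 + (Complex.I / 4) * q t * conj (q t) with hA
  set c : ℝ → ℂ := fun t => lam * conj (q t) with hc
  have hAconj : ∀ t, conj (A t) = -A t := by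
    intro t
    simp only [hA, map_add, map_mul, map_neg, Complex.conj_I, map_pow, hlam, map_div₀,
      Complex.conj_conj, map_ofNat]
    ring
  -- the difference h = g - conj f
  set h : ℝ → ℂ := fun t => g t - conj (f t) with hh
  -- derivative of conj ∘ f
  have hcf : ∀ t, HasDerivAt (fun s => conj (f s))
      (-A t * conj (f t) - c t * conj (g t)) t := by
    intro t
    have := (hf t).star
    simp only [RCLike.star_def] at this
    convert this using 1
    case e'_4 => rfl
    simp only [map_add, map_mul, Complex.conj_conj, hAconj, hlam, hc]
    simp only [hA, map_mul, map_neg, Complex.conj_I, map_pow, hlam, map_div₀, map_one, map_ofNat]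
    ring
  -- h satisfies the real-linear ODE h' = -A h + c · conj h
  have hh' : ∀ t, HasDerivAt h (-A t * h t + c t * conj (h t)) t := by
    intro t
    have := (hg t).sub (hcf t)
    convert this using 1
    case e'_4 => rfl
    case e'_8 => rfl
    simp only [hh, map_sub, Complex.conj_conj, hc]
    ring
  -- interval
  set a : ℝ := min x x₀ - 1 with ha
  set b : ℝ := max x x₀ + 1 with hb
  have hab : a < b := by
    have h1 : min x x₀ ≤ max x x₀ := le_trans (min_le_left _ _) (le_max_left _ _)
    simp only [ha, hb]; linarith
  have hxmem : x ∈ Set.Icc a b := by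
    constructor
    · have := min_le_left x x₀; simp only [ha]; linarith
    · have := le_max_left x x₀; simp only [hb]; linarith
  have hx₀mem : x₀ ∈ Set.Ioo a b := by
    constructor
    · have := min_le_right x x₀; simp only [ha]; linarith
    · have := le_max_right x x₀; simp only [hb]; linarith
  -- clamp function
  set π : ℝ → ℝ := fun t => max a (min b t) with hπ
  have hπmem : ∀ t, π t ∈ Set.Icc a b := by
    intro t
    refine ⟨le_max_left _ _, ?_⟩
    simp only [hπ, max_le_iff]
    exact ⟨hab.le, min_le_left _ _⟩
  have hπeq : ∀ t ∈ Set.Ioo a b, π t = t := by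
    intro t ht
    simp only [hπ, min_eq_right ht.2.le, max_eq_right ht.1.le]
  -- bound on the Lipschitz constant over the interval
  have hcontAC : Continuous (fun t => ‖A t‖ + ‖c t‖) := by
    apply Continuous.add
    · exact (continuous_const.add ((continuous_const.mul hq).mul
        (Complex.continuous_conj.comp hq))).norm
    · exact (continuous_const.mul (Complex.continuous_conj.comp hq)).norm
  obtain ⟨C, hC⟩ := (isCompact_Icc (a := a) (b := b)).exists_bound_of_continuousOn
    hcontAC.continuousOn
  have hC' : ∀ t ∈ Set.Icc a b, ‖A t‖ + ‖c t‖ ≤ C := by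
    intro t ht
    have := hC t ht
    have h2 : ‖A t‖ + ‖c t‖ ≤ ‖(‖A t‖ + ‖c t‖ : ℝ)‖ := le_abs_self _
    linarith
  -- the clamped vector field
  set v : ℝ → ℂ → ℂ := fun t z => -A (π t) * z + c (π t) * conj z with hv
  have hlip : ∀ t, LipschitzWith C.toNNReal (v t) := by
    intro t
    apply LipschitzWith.of_dist_le_mul
    intro z z'
    have hbd := hC' (π t) (hπmem t)
    rw [Complex.dist_eq, Complex.dist_eq]
    have : v t z - v t z' = -A (π t) * (z - z') + c (π t) * conj (z - z') := by
      simp only [hv, map_sub]; ring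
    rw [this]
    calc ‖-A (π t) * (z - z') + c (π t) * conj (z - z')‖
        ≤ ‖-A (π t) * (z - z')‖ + ‖c (π t) * conj (z - z')‖ := norm_add_le _ _
      _ = (‖A (π t)‖ + ‖c (π t)‖) * ‖z - z'‖ := by
          rw [norm_mul, norm_mul, norm_neg, RCLike.norm_conj]; ring
      _ ≤ C * ‖z - z'‖ := by
          apply mul_le_mul_of_nonneg_right hbd (norm_nonneg _)
      _ ≤ C.toNNReal * ‖z - z'‖ := by
          apply mul_le_mul_of_nonneg_right (Real.le_coe_toNNReal C) (norm_nonneg _)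
  -- apply uniqueness
  have key : Set.EqOn h (fun _ => 0) (Set.Icc a b) := by
    apply ODE_solution_unique_of_mem_Icc (v := v) (s := fun _ => Set.univ)
      (fun t _ => (hlip t).lipschitzOnWith) hx₀mem
    · exact fun t _ => (hh' t).continuousAt.continuousWithinAt
    · intro t ht
      have := hh' t
      simp only [hv, hπeq t ht]
      exact this
    · exact fun _ _ => trivial
    · exact continuousOn_const
    · intro t ht
      have : v t 0 = 0 := by simp [hv]
      rw [this]
      exact hasDerivAt_const t 0
    · exact fun _ _ => trivial
    · simp [hh, h0]
  have := key hxmem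
  simp only [hh] at this
  exact sub_eq_zero.mp this
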